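/- Let s, κ ∈ ℂ and let σ, σ̃ : ℝ → ℂ be functions. Suppose R : ℝ → Matrix (Fin 3) (Fin 3) ℂ is differentiable, R(x) is unit lower triangular for every x, and R'(x) + R(x)·F(σ̃)(x) = F(σ)(x)·R(x) for all x ∈ ℝ. Then for all x ∈ ℝ: R₂₁(x) = (s+κ)(σ(x) − σ̃(x)) and R₃₂(x) = (s−κ)(σ(x) − σ̃(x)). -/
import Mathlib


/-- The matrix F(σ) associated with the differential expression
ℓ_{σ,s,κ}(y) = y''' + s(σ'y)' + sσ'y' + κσ''y. -/
noncomputable def Fmat (s κ : ℂ) (σ : ℝ → ℂ) (x : ℝ) : Matrix (Fin 3) (Fin 3) ℂ :=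
  !![ -(s + κ) * σ x, 1, 0;
      -(3 * κ ^ 2 / 2 + s ^ 2 / 2 + 2 * κ * s) * σ x ^ 2, 2 * κ * σ x, 1;
      κ * (κ ^ 2 - s ^ 2) * σ x ^ 3,
        -(3 * κ ^ 2 / 2 + s ^ 2 / 2 - 2 * κ * s) * σ x ^ 2, (s - κ) * σ x ]

/-- A 3×3 matrix is unit lower triangular if its diagonal entries are 1 and the
entries above the diagonal are 0. -/
def UnitLowerTriangular (A : Matrix (Fin 3) (Fin 3) ℂ) : Prop :=
  (∀ i, A i i = 1) ∧ ∀ i j : Fin 3, i < j → A i j = 0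

/-- If R is a differentiable unit lower triangular matrix function satisfying
R' + R·F(σ̃) = F(σ)·R, then the subdiagonal entries of R are
R₂₁ = (s+κ)(σ − σ̃) and R₃₂ = (s−κ)(σ − σ̃). -/
theorem subdiagonal_entries (s κ : ℂ) (σ σtil : ℝ → ℂ)
    (R R' : ℝ → Matrix (Fin 3) (Fin 3) ℂ)
    (hR : ∀ (x : ℝ) (i j : Fin 3), HasDerivAt (fun t => R t i j) (R' x i j) x)
    (hTri : ∀ x : ℝ, UnitLowerTriangular (R x))
    (heq : ∀ x : ℝ, R' x + R x * Fmat s κ σtil x = Fmat s κ σ x * R x) :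
    ∀ x : ℝ, R x 1 0 = (s + κ) * (σ x - σtil x)
      ∧ R x 2 1 = (s - κ) * (σ x - σtil x) := by
  intro x
  have hd0 : R' x 0 0 = 0 := by
    have h1 : (fun t => R t 0 0) = fun _ : ℝ => (1 : ℂ) := by
      funext t; exact (hTri t).1 0
    have := hR x 0 0
    rw [h1] at this
    exact this.unique (hasDerivAt_const x 1)
  have hd1 : R' x 1 1 = 0 := by
    have h1 : (fun t => R t 1 1) = fun _ : ℝ => (1 : ℂ) := by
      funext t; exact (hTri t).1 1
    have := hR x 1 1
    rw [h1] at this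
    exact this.unique (hasDerivAt_const x 1)
  obtain ⟨hdiag, hupper⟩ := hTri x
  have h00 := congr_fun (congr_fun (heq x) 0) 0
  have h11 := congr_fun (congr_fun (heq x) 1) 1
  have e00 : R x 0 0 = 1 := hdiag 0
  have e11 : R x 1 1 = 1 := hdiag 1
  have e01 : R x 0 1 = 0 := hupper 0 1 (by decide)
  have e02 : R x 0 2 = 0 := hupper 0 2 (by decide)
  have e12 : R x 1 2 = 0 := hupper 1 2 (by decide)
  simp [Fmat, Matrix.mul_apply, Fin.sum_univ_three, Matrix.add_apply,
    e00, e11, e01, e02, e12, hd0, hd1] at h00 h11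
  constructor
  · linear_combination -h00
  · linear_combination -h11 - h00
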